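/- In the two-attacker contest without the commit-reveal protocol, if f̲₁ ≥ f̄₂ then there is a pure-strategy equilibrium in which attacker 1 spends f̲₁ and attacker 2 spends 0, where f̲₁ = argmax_f {P·γ₁·q(f) - f} and f̄₂ is the unique positive solution of P·γ₂·q(f) = f. -/

import Mathlib

open Classical in
/-- Attacker 1's payoff in the contest: the higher spender wins (ties go to
attacker 1), the winner succeeds with probability `γ·q(f)` earning prize `P`,
and both pay their expenditure. -/
noncomputable def pay1 (P γ1 : ℝ) (q : ℝ → ℝ) (f1 f2 : ℝ) : ℝ :=
  if f2 ≤ f1 then P * γ1 * q f1 - f1 else -f1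

open Classical in
/-- Attacker 2's payoff in the contest (ties go to attacker 1). -/
noncomputable def pay2 (P γ2 : ℝ) (q : ℝ → ℝ) (f2 f1 : ℝ) : ℝ :=
  if f1 < f2 then P * γ2 * q f2 - f2 else -f2

/-- If `f̲₁ ≥ f̄₂`, then (attacker 1 spends `f̲₁`, attacker 2 spends `0`) is a
pure-strategy equilibrium of the two-attacker contest, where `f̲₁` maximizes
`P·γ₁·q(f) - f` over `f ≥ 0` and `f̄₂ > 0` is the unique positive solution of
`P·γ₂·q(f) = f`. -/
theorem contest_pure_equilibrium (P γ1 γ2 : ℝ) (q : ℝ → ℝ)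
    (hP : 0 < P) (hγ2 : 0 < γ2) (hγ : γ2 ≤ γ1)
    (hmono : StrictMonoOn q (Set.Ici 0))
    (hconc : StrictConcaveOn ℝ (Set.Ici 0) q)
    (hdiff : DifferentiableOn ℝ q (Set.Ici 0))
    (hq0 : q 0 = 0) (hqrange : ∀ f ≥ (0:ℝ), q f ∈ Set.Icc (0:ℝ) 1)
    (flo1 fbar2 : ℝ) (hflo1 : 0 ≤ flo1)
    (hmax : ∀ f ≥ (0:ℝ), P * γ1 * q f - f ≤ P * γ1 * q flo1 - flo1)
    (hbar2 : 0 < fbar2) (hzero : P * γ2 * q fbar2 = fbar2)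
    (huniq : ∀ f > (0:ℝ), P * γ2 * q f = f → f = fbar2)
    (hge : fbar2 ≤ flo1) :
    (∀ f1 ≥ (0:ℝ), pay1 P γ1 q f1 0 ≤ pay1 P γ1 q flo1 0) ∧
    (∀ f2 ≥ (0:ℝ), pay2 P γ2 q f2 flo1 ≤ pay2 P γ2 q 0 flo1) := by
  constructor
  · intro f1 hf1
    simp only [pay1, if_pos hf1, if_pos hflo1]
    exact hmax f1 hf1
  · intro f2 hf2
    have h0 : pay2 P γ2 q 0 flo1 = 0 := by
      simp [pay2, not_lt.2 hflo1]
    rw [h0, pay2]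
    split_ifs with h
    · -- flo1 < f2, so fbar2 < f2; show P*γ2*q f2 - f2 ≤ 0
      have hf2pos : 0 < f2 := lt_of_le_of_lt hflo1 h
      have hlt : fbar2 < f2 := lt_of_le_of_lt hge h
      set t : ℝ := fbar2 / f2 with ht
      have ht0 : 0 < t := div_pos hbar2 hf2pos
      have ht1 : t < 1 := (div_lt_one hf2pos).2 hlt
      have hne : (0:ℝ) ≠ f2 := ne_of_lt hf2pos
      have key := hconc.2 Set.self_mem_Ici (Set.mem_Ici.2 hf2pos.le) hne
        (by linarith : (0:ℝ) < 1 - t) ht0 (by ring)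
      have hcomb : (1 - t) • (0:ℝ) + t • f2 = fbar2 := by
        rw [smul_eq_mul, smul_eq_mul, mul_zero, zero_add, ht]
        exact div_mul_cancel₀ fbar2 hf2pos.ne'
      rw [hcomb, hq0, smul_eq_mul, smul_eq_mul, mul_zero, zero_add] at key
      -- key : t * q f2 < q fbar2
      have h2 : P * γ2 * (t * q f2) < P * γ2 * q fbar2 :=
        mul_lt_mul_of_pos_left key (by positivity)
      rw [hzero] at h2
      have : P * γ2 * q f2 < f2 := by
        have htf : t * f2 = fbar2 := by rw [ht]; exact div_mul_cancel₀ fbar2 hf2pos.ne'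
        nlinarith
      linarith
    · linarith
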